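/- Let K be a uniformly random k-subset of [n] and let 2q ≤ n. For any estimator K̂ that is a (possibly randomized) function of K ∩ [2q], the probability of exact recovery satisfies P(K̂ = K) = E[1 / C(n − 2q, k − X)], where X = |K ∩ [2q]|. -/

import Mathlib

open Finset

/-- Recovery probability identity: let `K` be a uniformly random `k`-subset of `[n]`,
`Q = {1,…,2q}`, and let `K̂` be a (possibly randomized, with seed `r` uniform on a finite
set `R`) estimator depending only on `K ∩ Q` (which on every achievable value `S` of
`K ∩ Q` outputs a `k`-set whose intersection with `Q` is `S`). Then
`P(K̂ = K) = E[1 / C(n - 2q, k - X)]` where `X = |K ∩ Q|`. -/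
theorem stmt_12 (n k q : ℕ) (hq : 2 * q ≤ n) (hk : k ≤ n)
    (Q : Finset (Fin n))
    (hQ : Q = Finset.univ.filter (fun i : Fin n => (i : ℕ) < 2 * q))
    (R : Type) [Fintype R] [Nonempty R]
    (Khat : R → Finset (Fin n) → Finset (Fin n))
    (hKhat : ∀ r : R, ∀ S ⊆ Q, S.card ≤ k → k - S.card ≤ n - 2 * q →
      Khat r S ∩ Q = S ∧ (Khat r S).card = k) :
    (Nat.card {p : R × Finset (Fin n) //
        p.2.card = k ∧ Khat p.1 (p.2 ∩ Q) = p.2} : ℝ)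
        / ((Fintype.card R : ℝ) * (n.choose k : ℝ))
      = (∑ K ∈ Finset.powersetCard k (Finset.univ : Finset (Fin n)),
          (1 : ℝ) / ((n - 2 * q).choose (k - (K ∩ Q).card) : ℝ)) / (n.choose k : ℝ) := by
  classical
  have hmem : ∀ i : Fin n, i ∈ Q ↔ (i : ℕ) < 2 * q := by
    simp [hQ]
  have hQcard : Q.card = 2 * q := by
    rw [show 2 * q = (Finset.range (2 * q)).card from (Finset.card_range _).symm]
    apply Finset.card_bij (fun (i : Fin n) _ => (i : ℕ))
    · intro i hi; simpa using (hmem i).1 hi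
    · intro a _ b _ h; exact Fin.val_injective h
    · intro j hj
      rw [Finset.mem_range] at hj
      exact ⟨⟨j, lt_of_lt_of_le hj hq⟩, (hmem _).2 hj, rfl⟩
  have hQc : Qᶜ.card = n - 2 * q := by
    rw [Finset.card_compl, Fintype.card_fin, hQcard]
  set A : Finset (Finset (Fin n)) :=
    Q.powerset.filter (fun S => S.card ≤ k ∧ k - S.card ≤ n - 2 * q) with hA
  have memA : ∀ S : Finset (Fin n),
      S ∈ A ↔ S ⊆ Q ∧ S.card ≤ k ∧ k - S.card ≤ n - 2 * q := by
    intro S; simp [hA, Finset.mem_filter, Finset.mem_powerset, and_assoc]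
  -- Every k-set's intersection with Q lands in A
  have hKA : ∀ K : Finset (Fin n), K.card = k → K ∩ Q ∈ A := by
    intro K hK
    rw [memA]
    refine ⟨Finset.inter_subset_right, ?_, ?_⟩
    · rw [← hK]; exact Finset.card_le_card Finset.inter_subset_left
    · have h1 : (K ∩ Q).card + (K \ Q).card = K.card :=
        Finset.card_inter_add_card_sdiff K Q
      have h2 : (K \ Q).card ≤ Qᶜ.card := by
        apply Finset.card_le_card
        intro x hx
        rw [Finset.mem_sdiff] at hx
        simpa [Finset.mem_compl] using hx.2
      omega
  -- Fiber cardinality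
  have hfib : ∀ S ∈ A, ((Finset.powersetCard k (Finset.univ : Finset (Fin n))).filter
      (fun K => K ∩ Q = S)).card = (n - 2 * q).choose (k - S.card) := by
    intro S hS
    rw [memA] at hS
    obtain ⟨hSQ, hSk, hSnq⟩ := hS
    rw [← hQc, ← Finset.card_powersetCard]
    apply Finset.card_bij (fun (K : Finset (Fin n)) _ => K \ Q)
    · intro K hK
      rw [Finset.mem_filter, Finset.mem_powersetCard] at hK
      obtain ⟨⟨_, hKk⟩, hKQ⟩ := hK
      rw [Finset.mem_powersetCard]
      constructor
      · intro x hx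
        rw [Finset.mem_sdiff] at hx
        simpa [Finset.mem_compl] using hx.2
      · have h1 : (K ∩ Q).card + (K \ Q).card = K.card :=
          Finset.card_inter_add_card_sdiff K Q
        rw [hKQ] at h1
        omega
    · intro K1 h1 K2 h2 h
      rw [Finset.mem_filter] at h1 h2
      calc K1 = K1 ∩ Q ∪ K1 \ Q := by
              rw [Finset.union_comm, Finset.sdiff_union_inter]
        _ = K2 ∩ Q ∪ K2 \ Q := by rw [h1.2, h2.2, h]
        _ = K2 := by rw [Finset.union_comm, Finset.sdiff_union_inter]
    · intro T hT
      rw [Finset.mem_powersetCard] at hT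
      obtain ⟨hTc, hTcard⟩ := hT
      have hdisj : Disjoint S T := by
        apply Finset.disjoint_left.2
        intro x hxS hxT
        exact (Finset.mem_compl.1 (hTc hxT)) (hSQ hxS)
      have hTQ : T ∩ Q = ∅ := by
        apply Finset.eq_empty_of_forall_notMem
        intro x hx
        rw [Finset.mem_inter] at hx
        exact (Finset.mem_compl.1 (hTc hx.1)) hx.2
      refine ⟨S ∪ T, ?_, ?_⟩
      · rw [Finset.mem_filter, Finset.mem_powersetCard]
        refine ⟨⟨Finset.subset_univ _, ?_⟩, ?_⟩
        · rw [Finset.card_union_of_disjoint hdisj, hTcard]; omega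
        · rw [Finset.union_inter_distrib_right, hTQ,
            Finset.inter_eq_left.2 hSQ, Finset.union_empty]
      · rw [Finset.union_sdiff_distrib, Finset.sdiff_eq_empty_iff_subset.2 hSQ,
          Finset.empty_union, Finset.sdiff_eq_self_iff_disjoint]
        exact Finset.disjoint_left.2 fun x hxT hxQ =>
          (Finset.mem_compl.1 (hTc hxT)) hxQ
  -- The RHS sum equals A.card
  have hsum : (∑ K ∈ Finset.powersetCard k (Finset.univ : Finset (Fin n)),
      (1 : ℝ) / ((n - 2 * q).choose (k - (K ∩ Q).card) : ℝ)) = (A.card : ℝ) := by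
    rw [← Finset.sum_fiberwise_of_maps_to (g := fun K => K ∩ Q) (t := A)
      (fun K hK => hKA K (Finset.mem_powersetCard.1 hK).2)]
    rw [Finset.card_eq_sum_ones A, Nat.cast_sum]
    apply Finset.sum_congr rfl
    intro S hS
    have hch : (0 : ℝ) < ((n - 2 * q).choose (k - S.card) : ℝ) := by
      exact_mod_cast Nat.choose_pos ((memA S).1 hS).2.2
    have : ∀ K ∈ (Finset.powersetCard k (Finset.univ : Finset (Fin n))).filter
        (fun K => K ∩ Q = S),
        (1 : ℝ) / ((n - 2 * q).choose (k - (K ∩ Q).card) : ℝ)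
          = (1 : ℝ) / ((n - 2 * q).choose (k - S.card) : ℝ) := by
      intro K hK
      rw [(Finset.mem_filter.1 hK).2]
    rw [Finset.sum_congr rfl this, Finset.sum_const, hfib S hS, nsmul_eq_mul]
    push_cast
    field_simp
  -- The LHS count
  have hcount : Nat.card {p : R × Finset (Fin n) //
      p.2.card = k ∧ Khat p.1 (p.2 ∩ Q) = p.2} = Fintype.card R * A.card := by
    have e : {p : R × Finset (Fin n) // p.2.card = k ∧ Khat p.1 (p.2 ∩ Q) = p.2}
        ≃ R × {S // S ∈ A} :=
      { toFun := fun p => (p.1.1, ⟨p.1.2 ∩ Q, hKA _ p.2.1⟩)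
        invFun := fun x => ⟨(x.1, Khat x.1 x.2.1), by
          obtain ⟨hS, hSk, hSnq⟩ := (memA x.2.1).1 x.2.2
          obtain ⟨h1, h2⟩ := hKhat x.1 x.2.1 hS hSk hSnq
          exact ⟨h2, by rw [h1]⟩⟩
        left_inv := fun p => by
          apply Subtype.ext
          exact Prod.ext rfl p.2.2
        right_inv := fun x => by
          obtain ⟨hS, hSk, hSnq⟩ := (memA x.2.1).1 x.2.2
          obtain ⟨h1, h2⟩ := hKhat x.1 x.2.1 hS hSk hSnq
          exact Prod.ext rfl (Subtype.ext h1) }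
    rw [Nat.card_eq_fintype_card, Fintype.card_congr e, Fintype.card_prod,
      Fintype.card_coe]
  rw [hcount, hsum]
  have hR : (0 : ℝ) < (Fintype.card R : ℝ) := by
    exact_mod_cast Fintype.card_pos
  have hC : ((n.choose k : ℝ)) ≠ 0 := by
    exact_mod_cast (Nat.choose_pos hk).ne'
  push_cast
  field_simp
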